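/- Let s, t be points with segment [st] horizontal, and let C be a circle passing through points v above [st] and v' below [st] whose center O' lies on the perpendicular bisector of [vv']. If O' is moved along this bisector in the direction of the counterclockwise arc from v to v' until either the line st is tangent to the circle or v is the leftmost point of the circle (whichever occurs first), and v lies above st strictly between the leftmost point of the original circle and its left intersection with st, then v becomes the leftmost point of the resulting circle (the tangency case does not occur first). -/

import Mathlib

open EuclideanGeometry Real

lemma dist_sq2 (x y : EuclideanSpace ℝ (Fin 2)) :
    dist x y ^ 2 = (x 0 - y 0) ^ 2 + (x 1 - y 1) ^ 2 := by
  rw [EuclideanSpace.dist_eq, Real.sq_sqrt (by positivity)]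
  simp [Fin.sum_univ_two, Real.dist_eq, sq_abs]

theorem worst_case_circle (s t v v' O : EuclideanSpace ℝ (Fin 2))
    (hst : s 1 = t 1) (hstx : s 0 < t 0)
    (hv_above : s 1 < v 1) (hv'_below : v' 1 < s 1)
    (hcirc : dist O v = dist O v')
    (hvx : v 0 < O 0) (hvy : v 1 < O 1) :
    ∃ P : EuclideanSpace ℝ (Fin 2),
      dist P v = dist P v' ∧ P 1 = v 1 ∧ v 0 ≤ P 0 ∧
      ∀ Q ∈ segment ℝ O P, |Q 1 - s 1| < dist Q v := by
  have hO2 : (O 0 - v 0) ^ 2 + (O 1 - v 1) ^ 2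
      = (O 0 - v' 0) ^ 2 + (O 1 - v' 1) ^ 2 := by
    have := congrArg (· ^ 2) hcirc
    simpa [dist_sq2] using this
  have ha : v 0 < v' 0 := by nlinarith
  have hane : (2 : ℝ) * (v' 0 - v 0) ≠ 0 := ne_of_gt (by linarith)
  set d : ℝ := ((v' 0 - v 0) ^ 2 + (v 1 - v' 1) ^ 2) / (2 * (v' 0 - v 0)) with hd
  have hdpos : 0 < d := by
    apply div_pos
    · nlinarith
    · linarith
  set P : EuclideanSpace ℝ (Fin 2) := !₂[v 0 + d, v 1] with hP
  have hP0 : P 0 = v 0 + d := rfl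
  have hP1 : P 1 = v 1 := rfl
  have hP2 : (v 0 + d - v 0) ^ 2 + (v 1 - v 1) ^ 2
      = (v 0 + d - v' 0) ^ 2 + (v 1 - v' 1) ^ 2 := by
    have hne' : v' 0 - v 0 ≠ 0 := sub_ne_zero.mpr (ne_of_gt ha)
    rw [hd]; field_simp; ring
  refine ⟨P, ?_, hP1, by linarith, ?_⟩
  · rw [EuclideanSpace.dist_eq, EuclideanSpace.dist_eq]
    congr 1
    simp only [Fin.sum_univ_two, Real.dist_eq, sq_abs, hP0, hP1]
    linarith
  · rintro Q ⟨α, β, hα, hβ, hab, rfl⟩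
    obtain rfl : β = 1 - α := by linarith
    have hα1 : α ≤ 1 := by linarith
    have hq0 : (α • O + (1 - α) • P) 0 = α * O 0 + (1 - α) * (v 0 + d) := by
      show α * O 0 + (1 - α) * P 0 = _; rw [hP0]
    have hq1 : (α • O + (1 - α) • P) 1 = α * O 1 + (1 - α) * v 1 := by
      show α * O 1 + (1 - α) * P 1 = _; rw [hP1]
    set q0 : ℝ := α * O 0 + (1 - α) * (v 0 + d) with hq0d
    set q1 : ℝ := α * O 1 + (1 - α) * v 1 with hq1d
    have haux : 0 ≤ α * (O 1 - v 1) := mul_nonneg hα (sub_nonneg.mpr hvy.le)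
    have hq1v : v 1 ≤ q1 := by
      have hring : q1 - v 1 = α * (O 1 - v 1) := by rw [hq1d]; ring
      linarith
    have hD2 : dist (α • O + (1 - α) • P) v ^ 2 = (q0 - v 0) ^ 2 + (q1 - v 1) ^ 2 := by
      rw [dist_sq2, hq0, hq1]
    have hQeq : (q0 - v 0) ^ 2 + (q1 - v 1) ^ 2
        = (q0 - v' 0) ^ 2 + (q1 - v' 1) ^ 2 := by
      rw [hq0d, hq1d]
      linear_combination α * hO2 + (1 - α) * hP2
    have hDnn : 0 ≤ dist (α • O + (1 - α) • P) v := dist_nonneg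
    rw [hq1, abs_of_pos (by linarith)]
    set D : ℝ := dist (α • O + (1 - α) • P) v with hDdef
    clear_value D q0 q1 d
    have h1 : (q1 - s 1) ^ 2 < (q1 - v' 1) ^ 2 :=
      pow_lt_pow_left₀ (by linarith) (by linarith) two_ne_zero
    have hkey : (q1 - s 1) ^ 2 < D ^ 2 := by
      rw [hD2, hQeq]
      have := sq_nonneg (q0 - v' 0)
      linarith
    exact lt_of_pow_lt_pow_left₀ 2 hDnn hkey
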